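/- (Correctness of the abstract path-fixing algorithm) Given a directed graph G with capacities c, a simple path P with nodes p_1, ..., p_{k+1}, and a pseudoflow f_0, the abstract fixing procedure outputs a pseudoflow f' such that: (i) f' - f_0 satisfies conservation at all nodes not on P, and (ii) with respect to f', there is no residual path from any node of P with positive inflow to any node of P with negative inflow. -/

import Mathlib

/-- A directed graph given by darts: each dart has a tail, a head, and a reverse dart. -/
structure Dgraph (V D : Type) where
  tail : D → V
  head : D → V
  rev : D → D
  rev_rev : ∀ d, rev (rev d) = d
  tail_rev : ∀ d, tail (rev d) = head d
  head_rev : ∀ d, head (rev d) = tail d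

namespace Dgraph

variable {V D : Type}

/-- an antisymmetric flow assignment -/
def Antisym (G : Dgraph V D) (f : D → ℝ) : Prop :=
  ∀ d, f (G.rev d) = - f d

/-- net inflow of a flow assignment at a node -/
noncomputable def inflow [Fintype D] [DecidableEq V] (G : Dgraph V D) (f : D → ℝ) (v : V) : ℝ :=
  ∑ d ∈ Finset.univ.filter (fun d => G.head d = v), f d

/-- one step along a dart of strictly positive capacity -/
def ResStep (G : Dgraph V D) (cap : D → ℝ) (u v : V) : Prop :=
  ∃ d, G.tail d = u ∧ G.head d = v ∧ 0 < cap d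

/-- existence of a path all of whose darts have strictly positive capacity -/
def ResReach (G : Dgraph V D) (cap : D → ℝ) (u v : V) : Prop :=
  Relation.ReflTransGen (G.ResStep cap) u v

/-- a pseudoflow: antisymmetric and respecting all capacities -/
def Pseudoflow (G : Dgraph V D) (c f : D → ℝ) : Prop :=
  G.Antisym f ∧ ∀ d, f d ≤ c d

end Dgraph

namespace Dgraph

variable {V D : Type} [Fintype D] [DecidableEq V] [DecidableEq D]

/-- `g` is a maximum feasible flow from `a` to `b` with limit `x` (w.r.t. capacities `cap`). -/
def MaxLimFlow (G : Dgraph V D) (cap : D → ℝ) (a b : V) (x : ℝ) (g : D → ℝ) : Prop :=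
  G.Antisym g ∧ (∀ d, g d ≤ cap d) ∧
  (∀ v, v ≠ a → v ≠ b → G.inflow g v = 0) ∧
  G.inflow g b ≤ x ∧
  ∀ g' : D → ℝ, G.Antisym g' → (∀ d, g' d ≤ cap d) →
    (∀ v, v ≠ a → v ≠ b → G.inflow g' v = 0) →
    G.inflow g' b ≤ x → G.inflow g' b ≤ G.inflow g b

/-- capacities at stage `i` of the abstract fixing procedure: darts of the path with
index at least `i` (and their reverses) still carry the extra capacity `M`. -/
noncomputable def fixCaps (G : Dgraph V D) (c0 : D → ℝ) (M : ℝ) {k : ℕ}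
    (dP : Fin k → D) (i : ℕ) (d : D) : ℝ :=
  c0 d + (if ∃ j : Fin k, i ≤ (j : ℕ) ∧ (d = dP j ∨ d = G.rev (dP j)) then M else 0)

/-- restoring the capacity of the dart `d0` and of `rev d0`: truncate the flow on each
of them in turn to the (restored) capacity `κ`, keeping antisymmetry. -/
noncomputable def truncAt (G : Dgraph V D) (κ : D → ℝ) (f : D → ℝ) (d0 : D) : D → ℝ :=
  let m := min (f d0) (κ d0)
  let f1 := Function.update (Function.update f d0 m) (G.rev d0) (-m)
  let m2 := min (f1 (G.rev d0)) (κ (G.rev d0))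
  Function.update (Function.update f1 (G.rev d0) m2) d0 (-m2)

/-- one iteration of the abstract fixing procedure at position `i`: restore the
capacities of `d_i` and `rev d_i`, then push a maximum flow with limit `|inflow(p_i)|`
from `p_i` to `p_{i+1}` (if the inflow at `p_i` is positive) or from `p_{i+1}` to `p_i`
(otherwise). -/
noncomputable def FixStep (G : Dgraph V D) (c0 : D → ℝ) (M : ℝ) {k : ℕ}
    (p : Fin (k+1) → V) (dP : Fin k → D) (i : Fin k) (f f' : D → ℝ) : Prop :=
  ∃ t g : D → ℝ,
    t = G.truncAt (G.fixCaps c0 M dP ((i : ℕ) + 1)) f (dP i) ∧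
    ((0 < G.inflow t (p i.castSucc) ∧
        G.MaxLimFlow (fun d => G.fixCaps c0 M dP ((i : ℕ) + 1) d - t d)
          (p i.castSucc) (p i.succ) (G.inflow t (p i.castSucc)) g) ∨
     (G.inflow t (p i.castSucc) ≤ 0 ∧
        G.MaxLimFlow (fun d => G.fixCaps c0 M dP ((i : ℕ) + 1) d - t d)
          (p i.succ) (p i.castSucc) (-(G.inflow t (p i.castSucc))) g)) ∧
    f' = fun d => t d + g d

end Dgraph
namespace Dgraph

variable {V D : Type} [Fintype D] [DecidableEq V] [DecidableEq D]
variable (G : Dgraph V D)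
set_option linter.unusedSectionVars false

lemma rev_inj : Function.Injective G.rev := fun a b h => by
  have h2 := congrArg G.rev h
  simpa [G.rev_rev] using h2

lemma inflow_congr {f g : D → ℝ} {v : V} (h : ∀ d, G.head d = v → f d = g d) :
    G.inflow f v = G.inflow g v :=
  Finset.sum_congr rfl (fun d hd => h d (by simpa using hd))

lemma inflow_add (f g : D → ℝ) (v : V) :
    G.inflow (fun d => f d + g d) v = G.inflow f v + G.inflow g v := by
  simp [inflow, Finset.sum_add_distrib]

/-- balance lemma: the sum of inflows over a finite set of nodes equals the
sum of the flow over the darts crossing into the set. -/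
lemma bal {f : D → ℝ} (hf : G.Antisym f) (S : Finset V) :
    ∑ v ∈ S, G.inflow f v
      = ∑ d ∈ Finset.univ.filter (fun d => G.head d ∈ S ∧ G.tail d ∉ S), f d := by
  classical
  have h1 : ∑ v ∈ S, G.inflow f v
      = ∑ d ∈ Finset.univ.filter (fun d => G.head d ∈ S), f d := by
    rw [← Finset.sum_fiberwise_of_maps_to
      (g := G.head) (t := S)
      (fun d hd => (Finset.mem_filter.mp hd).2) f]
    refine Finset.sum_congr rfl (fun v hv => ?_)
    unfold inflow
    refine Finset.sum_congr ?_ (fun _ _ => rfl)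
    ext d
    simp only [Finset.mem_filter, Finset.mem_univ, true_and]
    exact ⟨fun h2 => ⟨h2 ▸ hv, h2⟩, fun h2 => h2.2⟩
  have h2 := Finset.sum_filter_add_sum_filter_not
    (Finset.univ.filter (fun d => G.head d ∈ S)) (fun d => G.tail d ∈ S) f
  have h3 : ∑ d ∈ (Finset.univ.filter (fun d => G.head d ∈ S)).filter
      (fun d => G.tail d ∈ S), f d = 0 := by
    apply Finset.sum_involution (fun d _ => G.rev d)
    · intro d hd
      rw [hf d]; ring
    · intro d hd hne
      intro heq
      apply hne
      have : f (G.rev d) = - f d := hf d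
      rw [heq] at this
      linarith
    · intro d hd
      simp only [Finset.mem_filter, Finset.mem_univ, true_and] at hd ⊢
      rw [G.head_rev, G.tail_rev]
      exact ⟨hd.2, hd.1⟩
    · intro d hd
      exact G.rev_rev d
  have h4 : (Finset.univ.filter (fun d => G.head d ∈ S)).filter
      (fun d => ¬ G.tail d ∈ S)
      = Finset.univ.filter (fun d => G.head d ∈ S ∧ G.tail d ∉ S) := by
    rw [Finset.filter_filter]
  rw [h1, ← h2, h3, zero_add, h4]

lemma inflow_total {g : D → ℝ} (hg : G.Antisym g) {a b : V} (hab : a ≠ b)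
    (hcons : ∀ v, v ≠ a → v ≠ b → G.inflow g v = 0) :
    G.inflow g a + G.inflow g b = 0 := by
  classical
  set S : Finset V := (Finset.univ.image G.head) ∪ {a, b} with hS
  have h0 : ∑ v ∈ S, G.inflow g v = 0 := by
    rw [G.bal hg S]
    apply Finset.sum_eq_zero
    intro d hd
    exfalso
    have h5 := (Finset.mem_filter.mp hd).2
    exact h5.2 (Finset.mem_union.mpr (Or.inl
      (Finset.mem_image.mpr ⟨G.rev d, Finset.mem_univ _, G.head_rev d⟩)))
  have hsub : ({a, b} : Finset V) ⊆ S := Finset.subset_union_right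
  have h6 : ∑ v ∈ ({a, b} : Finset V), G.inflow g v = ∑ v ∈ S, G.inflow g v := by
    apply Finset.sum_subset hsub
    intro v _ hv
    simp only [Finset.mem_insert, Finset.mem_singleton] at hv
    push_neg at hv
    exact hcons v hv.1 hv.2
  rw [Finset.sum_pair hab] at h6
  rw [h6, h0]

end Dgraph
namespace Dgraph

variable {V D : Type} [Fintype D] [DecidableEq V] [DecidableEq D]
variable (G : Dgraph V D)
set_option linter.unusedSectionVars false

lemma reach_mono {r r' : D → ℝ} (h : ∀ d, 0 < r' d → 0 < r d) {u v : V}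
    (hr : G.ResReach r' u v) : G.ResReach r u v := by
  induction hr with
  | refl => exact .refl
  | tail _ hstep ih =>
      obtain ⟨d, h1, h2, h3⟩ := hstep
      exact .tail ih ⟨d, h1, h2, h d h3⟩

lemma reach_stay {r : D → ℝ} (S : Set V)
    (hcl : ∀ d, G.tail d ∈ S → G.head d ∉ S → r d ≤ 0) :
    ∀ {u z : V}, G.ResReach r u z → u ∈ S → z ∈ S := by
  intro u z h
  induction h with
  | refl => exact id
  | tail _ hstep ih =>
      intro hu
      obtain ⟨d, h1, h2, h3⟩ := hstep
      by_contra hz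
      have h4 := hcl d (by rw [h1]; exact ih hu) (by rw [h2]; exact hz)
      linarith

lemma cross_of_reach_entry {r : D → ℝ} (S : Set V) :
    ∀ {u z : V}, G.ResReach r u z → u ∉ S → z ∈ S →
      ∃ d, 0 < r d ∧ G.tail d ∉ S ∧ G.head d ∈ S ∧ G.ResReach r u (G.tail d) := by
  intro u z h
  induction h using Relation.ReflTransGen.head_induction_on with
  | refl => intro hu hz; exact absurd hz hu
  | @head a c hstep hrest ih =>
      intro ha hz
      obtain ⟨d, h1, h2, h3⟩ := hstep
      by_cases hc : c ∈ S
      · exact ⟨d, h3, by rw [h1]; exact ha, by rw [h2]; exact hc, by rw [h1]; exact .refl⟩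
      · obtain ⟨d', k1, k2, k3, k4⟩ := ih hc hz
        exact ⟨d', k1, k2, k3, .head ⟨d, h1, h2, h3⟩ k4⟩

lemma cross_of_reach_exit {r : D → ℝ} (S : Set V) :
    ∀ {u z : V}, G.ResReach r u z → u ∈ S → z ∉ S →
      ∃ d, 0 < r d ∧ G.tail d ∈ S ∧ G.head d ∉ S ∧ G.ResReach r (G.head d) z := by
  intro u z h
  induction h with
  | refl => intro hu hz; exact absurd hu hz
  | @tail z' c hrest hstep ih =>
      intro hu hz
      obtain ⟨d, h1, h2, h3⟩ := hstep
      by_cases hc : z' ∈ S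
      · exact ⟨d, h3, by rw [h1]; exact hc, by rw [h2]; exact hz, by rw [h2]; exact .refl⟩
      · obtain ⟨d', k1, k2, k3, k4⟩ := ih hu hc
        exact ⟨d', k1, k2, k3, .tail k4 ⟨d, h1, h2, h3⟩⟩

/-- pushing a flow between two nodes on the same side of a saturated cut keeps
the cut saturated. -/
lemma push_saturates {r' g : D → ℝ} (hg : G.Antisym g) (hgle : ∀ d, g d ≤ r' d)
    {a b : V} (hab : a ≠ b) (hcons : ∀ v, v ≠ a → v ≠ b → G.inflow g v = 0)
    (S : Set V) (hcl : ∀ d, G.tail d ∈ S → G.head d ∉ S → r' d ≤ 0)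
    (hmem : (a ∈ S ↔ b ∈ S)) :
    ∀ d, G.tail d ∈ S → G.head d ∉ S → r' d - g d ≤ 0 := by
  classical
  set SF : Finset V := (Finset.univ.image G.head ∪ Finset.univ.image G.tail).filter
    (fun v => v ∈ S) with hSF
  have hmemSF : ∀ v ∈ SF, v ∈ S := fun v hv => (Finset.mem_filter.mp hv).2
  have hheadSF : ∀ d : D, G.head d ∈ S → G.head d ∈ SF := by
    intro d hd
    refine Finset.mem_filter.mpr ⟨Finset.mem_union.mpr (Or.inl ?_), hd⟩
    exact Finset.mem_image.mpr ⟨d, Finset.mem_univ _, rfl⟩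
  have htailSF : ∀ d : D, G.tail d ∈ S → G.tail d ∈ SF := by
    intro d hd
    refine Finset.mem_filter.mpr ⟨Finset.mem_union.mpr (Or.inr ?_), hd⟩
    exact Finset.mem_image.mpr ⟨d, Finset.mem_univ _, rfl⟩
  -- the sum of inflows of g over SF is zero
  have h0 : ∑ v ∈ SF, G.inflow g v = 0 := by
    by_cases haS : a ∈ S
    · have hbS : b ∈ S := hmem.mp haS
      have h6 : ∑ v ∈ SF ∩ {a, b}, G.inflow g v = ∑ v ∈ SF, G.inflow g v := by
        apply Finset.sum_subset Finset.inter_subset_left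
        intro v hv hv2
        have : v ∉ ({a, b} : Finset V) := by
          intro hvv; exact hv2 (Finset.mem_inter.mpr ⟨hv, hvv⟩)
        simp only [Finset.mem_insert, Finset.mem_singleton] at this
        push_neg at this
        exact hcons v this.1 this.2
      rw [← h6]
      have h7 : ∑ v ∈ ({a, b} : Finset V), G.inflow g v = 0 := by
        rw [Finset.sum_pair hab]
        exact G.inflow_total hg hab hcons
      rw [← h7]
      apply Finset.sum_subset Finset.inter_subset_right
      intro v hv hv2
      -- v ∈ {a,b} but v ∉ SF ∩ {a,b}: then v ∉ SF, so no dart has head v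
      have hvSF : v ∉ SF := fun hvSF => hv2 (Finset.mem_inter.mpr ⟨hvSF, hv⟩)
      have : Finset.univ.filter (fun d => G.head d = v) = ∅ := by
        apply Finset.eq_empty_of_forall_notMem
        intro d hd
        have hd2 := (Finset.mem_filter.mp hd).2
        apply hvSF
        rw [← hd2]
        apply hheadSF
        rw [hd2]
        -- v ∈ S since v ∈ {a,b} and a,b ∈ S
        simp only [Finset.mem_insert, Finset.mem_singleton] at hv
        rcases hv with rfl | rfl
        · exact haS
        · exact hbS
      unfold inflow
      rw [this, Finset.sum_empty]
    · have hbS : b ∉ S := fun hb => haS (hmem.mpr hb)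
      apply Finset.sum_eq_zero
      intro v hv
      have hvS := hmemSF v hv
      exact hcons v (fun h => haS (h ▸ hvS)) (fun h => hbS (h ▸ hvS))
  -- by the balance lemma, the total flow entering S is zero
  have hbal := G.bal hg SF
  rw [h0] at hbal
  -- hence the total flow leaving S is zero; each leaving dart has g d ≤ 0
  have hout : ∑ d ∈ Finset.univ.filter (fun d => G.tail d ∈ SF ∧ G.head d ∉ SF), g d = 0 := by
    have := Finset.sum_nbij' (i := fun d => G.rev d) (j := fun d => G.rev d)
      (s := Finset.univ.filter (fun d => G.tail d ∈ SF ∧ G.head d ∉ SF))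
      (t := Finset.univ.filter (fun d => G.head d ∈ SF ∧ G.tail d ∉ SF))
      (f := fun d => g d) (g := fun d => - g d)
      ?_ ?_ ?_ ?_ ?_
    · rw [this, Finset.sum_neg_distrib, ← hbal, neg_zero]
    · intro d hd
      simp only [Finset.mem_filter, Finset.mem_univ, true_and] at hd ⊢
      rw [G.head_rev, G.tail_rev]
      refine ⟨htailSF d ((hmemSF _ hd.1)), ?_⟩
      intro hc
      exact hd.2 (hheadSF d (hmemSF _ hc))
    · intro d hd
      simp only [Finset.mem_filter, Finset.mem_univ, true_and] at hd ⊢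
      rw [G.head_rev, G.tail_rev]
      refine ⟨hheadSF d ((hmemSF _ hd.1)), ?_⟩
      intro hc
      exact hd.2 (htailSF d (hmemSF _ hc))
    · intro d _; exact G.rev_rev d
    · intro d _; exact G.rev_rev d
    · intro d _
      show g d = - g (G.rev d)
      rw [hg d, neg_neg]
  -- each leaving dart has nonpositive g, and their sum is zero, so each is zero
  intro d hdt hdh
  have hdmem : d ∈ Finset.univ.filter (fun d => G.tail d ∈ SF ∧ G.head d ∉ SF) := by
    simp only [Finset.mem_filter, Finset.mem_univ, true_and]
    exact ⟨htailSF d hdt, fun hc => hdh (hmemSF _ hc)⟩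
  have hzero : g d = 0 := by
    have h8 := (Finset.sum_eq_zero_iff_of_nonpos ?_).mp hout d hdmem
    · exact h8
    · intro e he
      simp only [Finset.mem_filter, Finset.mem_univ, true_and] at he
      exact le_trans (hgle e) (hcl e (hmemSF _ he.1) (fun hc => he.2 (hheadSF e hc)))
  rw [hzero, sub_zero]
  exact hcl d hdt hdh

end Dgraph
namespace Dgraph

variable {V D : Type} [Fintype D] [DecidableEq V] [DecidableEq D]
variable (G : Dgraph V D)
set_option linter.unusedSectionVars false

/-- a walk along a list of darts -/
def IsWalk (G : Dgraph V D) : V → List D → V → Prop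
  | u, [], z => u = z
  | u, d :: L, z => G.tail d = u ∧ G.IsWalk (G.head d) L z

lemma reach_walk {r : D → ℝ} : ∀ {u z : V}, G.ResReach r u z →
    ∃ L : List D, G.IsWalk u L z ∧ ∀ d ∈ L, 0 < r d := by
  intro u z h
  induction h using Relation.ReflTransGen.head_induction_on with
  | refl => exact ⟨[], rfl, by simp⟩
  | @head a c hstep hrest ih =>
      obtain ⟨d, h1, h2, h3⟩ := hstep
      obtain ⟨L, hw, hpos⟩ := ih
      refine ⟨d :: L, ⟨h1, by rw [h2]; exact hw⟩, ?_⟩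
      intro e he
      rcases List.mem_cons.mp he with rfl | he2
      · exact h3
      · exact hpos e he2

lemma walk_flow_sum (v : V) : ∀ (L : List D) (u z : V), G.IsWalk u L z →
    (∑ d ∈ Finset.univ.filter (fun d => G.head d = v),
        ((L.count d : ℝ) - (L.count (G.rev d) : ℝ)))
      = (if v = z then 1 else 0) - (if v = u then 1 else 0)
  | [], u, z, h => by
      have : u = z := h
      subst this
      simp [List.count_nil]
  | d0 :: L, u, z, h => by
      obtain ⟨h1, h2⟩ := h
      have ih := walk_flow_sum v L (G.head d0) z h2
      have hcnt : ∀ e : D, (((d0 :: L).count e : ℕ) : ℝ)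
          = ((L.count e : ℕ) : ℝ) + (if e = d0 then (1:ℝ) else 0) := by
        intro e
        rw [List.count_cons]
        by_cases he : e = d0
        · subst he; simp
        · simp [he, Ne.symm he]
      have hsplit : ∀ d : D, ((((d0 :: L).count d : ℕ) : ℝ) - (((d0 :: L).count (G.rev d) : ℕ) : ℝ))
          = (((L.count d : ℕ) : ℝ) - ((L.count (G.rev d) : ℕ) : ℝ))
            + ((if d = d0 then (1:ℝ) else 0) - (if G.rev d = d0 then (1:ℝ) else 0)) := by
        intro d
        rw [hcnt d, hcnt (G.rev d)]
        ring
      rw [Finset.sum_congr rfl (fun d _ => hsplit d)]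
      rw [Finset.sum_add_distrib, ih, Finset.sum_sub_distrib]
      have e1 : (∑ d ∈ Finset.univ.filter (fun d => G.head d = v),
          (if d = d0 then (1:ℝ) else 0)) = if G.head d0 = v then 1 else 0 := by
        rw [Finset.sum_ite_eq' (Finset.univ.filter (fun d => G.head d = v)) d0 (fun _ => (1:ℝ))]
        simp only [Finset.mem_filter, Finset.mem_univ, true_and]
      have e2 : (∑ d ∈ Finset.univ.filter (fun d => G.head d = v),
          (if G.rev d = d0 then (1:ℝ) else 0)) = if G.tail d0 = v then 1 else 0 := by
        have hrw : ∀ d : D, (G.rev d = d0) = (d = G.rev d0) := by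
          intro d
          apply propext
          constructor
          · intro hh; rw [← hh, G.rev_rev]
          · intro hh; rw [hh, G.rev_rev]
        simp only [hrw]
        rw [Finset.sum_ite_eq' (Finset.univ.filter (fun d => G.head d = v)) (G.rev d0) (fun _ => (1:ℝ))]
        simp only [Finset.mem_filter, Finset.mem_univ, true_and, G.head_rev]
      rw [e1, e2, h1]
      by_cases hv2 : v = u <;> by_cases hv3 : v = G.head d0 <;>
        simp only [hv2, hv3, if_pos, if_neg, eq_self_iff_true, Ne.symm] <;>
        [skip; skip; skip; skip] <;>
        first
          | (subst hv3; simp [eq_comm]; try ring)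
          | (simp [hv2, hv3, eq_comm, Ne.symm]; try ring)
          | ring

end Dgraph
namespace Dgraph

variable {V D : Type} [Fintype D] [DecidableEq V] [DecidableEq D]
variable (G : Dgraph V D)
set_option linter.unusedSectionVars false

/-- a maximum limited flow that has not reached its limit admits no residual path
from the source to the sink. -/
lemma maxlim_no_residual {cap g : D → ℝ} {a b : V} {x : ℝ}
    (hml : G.MaxLimFlow cap a b x g) (hab : a ≠ b) (hv : G.inflow g b < x) :
    ¬ G.ResReach (fun d => cap d - g d) a b := by
  classical
  intro hreach
  obtain ⟨L, hw, hpos⟩ := G.reach_walk hreach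
  obtain ⟨hganti, hgle, hgcons, hglim, hgmax⟩ := hml
  have hLne : L ≠ [] := by
    rintro rfl
    exact hab hw
  have hlen : 0 < (L.length : ℝ) := by
    have := List.length_pos_iff.mpr hLne
    exact_mod_cast this
  have hfin : L.toFinset.Nonempty := by
    rcases List.exists_mem_of_ne_nil L hLne with ⟨d, hd⟩
    exact ⟨d, List.mem_toFinset.mpr hd⟩
  set rr : D → ℝ := fun d => cap d - g d with hrr
  set imin : ℝ := L.toFinset.inf' hfin rr with himin
  have himinpos : 0 < imin := by
    rw [himin, Finset.lt_inf'_iff]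
    intro d hd
    exact hpos d (List.mem_toFinset.mp hd)
  set eps : ℝ := min (x - G.inflow g b) (imin / L.length) with heps
  have hepspos : 0 < eps := lt_min (by linarith) (div_pos himinpos hlen)
  set chi : D → ℝ := fun d => ((L.count d : ℕ) : ℝ) - ((L.count (G.rev d) : ℕ) : ℝ) with hchi
  set g' : D → ℝ := fun d => g d + eps * chi d with hg'
  have hchirev : ∀ d, chi (G.rev d) = - chi d := by
    intro d
    rw [hchi]
    simp only [G.rev_rev]
    ring
  have hchile : ∀ d, chi d ≤ L.length := by
    intro d
    have h1 : L.count d ≤ L.length := List.count_le_length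
    have h2 : (0:ℝ) ≤ ((L.count (G.rev d) : ℕ) : ℝ) := by positivity
    have h3 : ((L.count d : ℕ) : ℝ) ≤ (L.length : ℝ) := by exact_mod_cast h1
    show ((L.count d : ℕ) : ℝ) - ((L.count (G.rev d) : ℕ) : ℝ) ≤ (L.length : ℝ)
    linarith
  have hchinonpos : ∀ d, d ∉ L → chi d ≤ 0 := by
    intro d hd
    rw [hchi]
    have h1 : L.count d = 0 := List.count_eq_zero.mpr hd
    simp only [h1]
    simp
  -- g' is a feasible flow
  have hg'anti : G.Antisym g' := by
    intro d
    rw [hg']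
    simp only []
    rw [hganti d, hchirev d]
    ring
  have hg'le : ∀ d, g' d ≤ cap d := by
    intro d
    rw [hg']
    simp only []
    by_cases hd : d ∈ L
    · have h1 : eps * chi d ≤ eps * L.length := by
        apply mul_le_mul_of_nonneg_left (hchile d) (le_of_lt hepspos)
      have h2 : eps * (L.length : ℝ) ≤ imin := by
        have h3 : eps ≤ imin / L.length := min_le_right _ _
        calc eps * (L.length : ℝ) ≤ (imin / L.length) * L.length :=
              mul_le_mul_of_nonneg_right h3 (le_of_lt hlen)
          _ = imin := by field_simp
      have h4 : imin ≤ rr d := Finset.inf'_le rr (List.mem_toFinset.mpr hd)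
      have h5 : rr d = cap d - g d := rfl
      linarith
    · have h1 : eps * chi d ≤ 0 :=
        mul_nonpos_of_nonneg_of_nonpos (le_of_lt hepspos) (hchinonpos d hd)
      have := hgle d
      linarith
  have hinflow : ∀ w : V, G.inflow g' w
      = G.inflow g w + eps * ((if w = b then 1 else 0) - (if w = a then 1 else 0)) := by
    intro w
    rw [hg']
    have h1 : G.inflow (fun d => g d + eps * chi d) w
        = G.inflow g w + eps * ∑ d ∈ Finset.univ.filter (fun d => G.head d = w), chi d := by
      unfold inflow
      rw [Finset.sum_add_distrib, Finset.mul_sum]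
    rw [h1, G.walk_flow_sum w L a b hw]
  have hg'cons : ∀ v, v ≠ a → v ≠ b → G.inflow g' v = 0 := by
    intro v hva hvb
    rw [hinflow v, hgcons v hva hvb]
    simp [hva, hvb]
  have hg'b : G.inflow g' b = G.inflow g b + eps := by
    rw [hinflow b]
    simp [Ne.symm hab]
  have hg'lim : G.inflow g' b ≤ x := by
    rw [hg'b]
    have : eps ≤ x - G.inflow g b := min_le_left _ _
    linarith
  have := hgmax g' hg'anti hg'le hg'cons hg'lim
  rw [hg'b] at this
  linarith

end Dgraph
namespace Dgraph

variable {V D : Type} [Fintype D] [DecidableEq V] [DecidableEq D]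
variable (G : Dgraph V D)
set_option linter.unusedSectionVars false

lemma inflow_sub (f g : D → ℝ) (v : V) :
    G.inflow (fun d => f d - g d) v = G.inflow f v - G.inflow g v := by
  simp [inflow, Finset.sum_sub_distrib]

variable {k : ℕ} {c0 : D → ℝ} {M : ℝ} {p : Fin (k+1) → V} {dP : Fin k → D}

lemma fixCaps_ge (hM0 : 0 ≤ M) (s : ℕ) (d : D) : c0 d ≤ G.fixCaps c0 M dP s d := by
  unfold fixCaps
  split <;> simp <;> linarith

lemma fixCaps_nonneg (hc0 : ∀ d, 0 ≤ c0 d) (hM0 : 0 ≤ M) (s : ℕ) (d : D) :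
    0 ≤ G.fixCaps c0 M dP s d :=
  le_trans (hc0 d) (G.fixCaps_ge hM0 s d)

lemma fixCaps_eq_c0 {s : ℕ} {d : D}
    (h : ∀ j : Fin k, s ≤ (j:ℕ) → d ≠ dP j ∧ d ≠ G.rev (dP j)) :
    G.fixCaps c0 M dP s d = c0 d := by
  unfold fixCaps
  rw [if_neg, add_zero]
  rintro ⟨j, hsj, hj | hj⟩
  · exact (h j hsj).1 hj
  · exact (h j hsj).2 hj

lemma fixCaps_last (d : D) : G.fixCaps c0 M dP k d = c0 d := by
  unfold fixCaps
  rw [if_neg, add_zero]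
  rintro ⟨j, hj, _⟩
  have := j.isLt
  omega

lemma fixCaps_path {s : ℕ} (j : Fin k) (h : s ≤ (j:ℕ)) :
    G.fixCaps c0 M dP s (dP j) = c0 (dP j) + M := by
  unfold fixCaps
  rw [if_pos ⟨j, h, Or.inl rfl⟩]

lemma fixCaps_path_rev {s : ℕ} (j : Fin k) (h : s ≤ (j:ℕ)) :
    G.fixCaps c0 M dP s (G.rev (dP j)) = c0 (G.rev (dP j)) + M := by
  unfold fixCaps
  rw [if_pos ⟨j, h, Or.inr rfl⟩]

section PathFacts

variable (hp : Function.Injective p)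
  (hdt : ∀ i, G.tail (dP i) = p i.castSucc) (hdh : ∀ i, G.head (dP i) = p i.succ)

include hp hdt hdh

lemma dP_inj {i j : Fin k} (h : dP i = dP j) : i = j := by
  have h1 : p i.castSucc = p j.castSucc := by rw [← hdt, ← hdt, h]
  have h2 := hp h1
  have h3 : (i : ℕ) = (j : ℕ) := by
    have := congrArg (fun x : Fin (k+1) => (x : ℕ)) h2
    simpa using this
  exact Fin.ext h3

lemma dP_ne_rev (i j : Fin k) : dP i ≠ G.rev (dP j) := by
  intro h
  have h1 : p i.castSucc = p j.succ := by
    rw [← hdt i, h, G.tail_rev, hdh j]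
  have h2 : p i.succ = p j.castSucc := by
    rw [← hdh i, h, G.head_rev, hdt j]
  have h3 := hp h1
  have h4 := hp h2
  have h5 : (i : ℕ) = (j : ℕ) + 1 := by
    have := congrArg (fun x : Fin (k+1) => (x : ℕ)) h3
    simpa using this
  have h6 : (i : ℕ) + 1 = (j : ℕ) := by
    have := congrArg (fun x : Fin (k+1) => (x : ℕ)) h4
    simpa using this
  omega

lemma rev_dP_ne_self (i : Fin k) : G.rev (dP i) ≠ dP i := by
  intro h
  exact dP_ne_rev G hp hdt hdh i i h.symm

lemma fixCaps_succ_eq (i : Fin k) {d : D} (hd1 : d ≠ dP i) (hd2 : d ≠ G.rev (dP i)) :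
    G.fixCaps c0 M dP ((i:ℕ)+1) d = G.fixCaps c0 M dP (i:ℕ) d := by
  unfold fixCaps
  congr 1
  have : (∃ j : Fin k, (i:ℕ)+1 ≤ (j : ℕ) ∧ (d = dP j ∨ d = G.rev (dP j)))
      ↔ (∃ j : Fin k, (i:ℕ) ≤ (j : ℕ) ∧ (d = dP j ∨ d = G.rev (dP j))) := by
    constructor
    · rintro ⟨j, hj, hd⟩; exact ⟨j, by omega, hd⟩
    · rintro ⟨j, hj, hd⟩
      refine ⟨j, ?_, hd⟩
      rcases Nat.eq_or_lt_of_le hj with heq | hlt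
      · exfalso
        have : i = j := Fin.ext heq
        subst this
        rcases hd with hd | hd
        · exact hd1 hd
        · exact hd2 hd
      · omega
  rw [if_congr this rfl rfl]

end PathFacts

/-- the set of path nodes strictly above index `j` -/
def UFset (p : Fin (k+1) → V) (j : ℕ) : Finset V :=
  (Finset.univ.filter (fun l : Fin (k+1) => j < (l:ℕ))).image p

lemma mem_UFset {j : ℕ} {v : V} :
    v ∈ UFset p j ↔ ∃ l : Fin (k+1), j < (l:ℕ) ∧ p l = v := by
  unfold UFset
  simp only [Finset.mem_image, Finset.mem_filter, Finset.mem_univ, true_and]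

end Dgraph
namespace Dgraph

variable {V D : Type} [Fintype D] [DecidableEq V] [DecidableEq D]
variable (G : Dgraph V D)
set_option linter.unusedSectionVars false
variable {k : ℕ} {c0 : D → ℝ} {M : ℝ} {p : Fin (k+1) → V} {dP : Fin k → D}

section Saturation

variable (hp : Function.Injective p)
  (hdt : ∀ i, G.tail (dP i) = p i.castSucc) (hdh : ∀ i, G.head (dP i) = p i.succ)

include hp hdt hdh

lemma p_mem_UFset {j : ℕ} {l : Fin (k+1)} : p l ∈ UFset p j ↔ j < (l:ℕ) := by
  rw [mem_UFset]
  constructor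
  · rintro ⟨l', h1, h2⟩
    have := hp h2
    subst this
    exact h1
  · intro h
    exact ⟨l, h, rfl⟩

lemma cross_ord {j : Fin k} {e : D} (hh : G.head e ∈ UFset p (j:ℕ))
    (ht : G.tail e ∉ UFset p (j:ℕ)) (hne : e ≠ dP j) :
    ∀ l : Fin k, e ≠ dP l ∧ e ≠ G.rev (dP l) := by
  intro l
  constructor
  · rintro rfl
    rw [hdh l] at hh
    rw [hdt l] at ht
    rw [p_mem_UFset G hp hdt hdh] at hh
    rw [p_mem_UFset G hp hdt hdh] at ht
    simp only [Fin.val_succ, Fin.coe_castSucc] at hh ht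
    have hlj : (l:ℕ) = (j:ℕ) := by omega
    exact hne (congrArg dP (Fin.ext hlj))
  · rintro rfl
    rw [G.head_rev, hdt l] at hh
    rw [G.tail_rev, hdh l] at ht
    rw [p_mem_UFset G hp hdt hdh] at hh
    rw [p_mem_UFset G hp hdt hdh] at ht
    simp only [Fin.val_succ, Fin.coe_castSucc] at hh ht
    omega

lemma dP_mem_cross {j : Fin k} :
    dP j ∈ Finset.univ.filter
      (fun d => G.head d ∈ UFset p (j:ℕ) ∧ G.tail d ∉ UFset p (j:ℕ)) := by
  simp only [Finset.mem_filter, Finset.mem_univ, true_and]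
  constructor
  · rw [hdh j, p_mem_UFset G hp hdt hdh]
    simp
  · rw [hdt j, p_mem_UFset G hp hdt hdh]
    simp

lemma cross_balance {F f0 : D → ℝ} (hFa : G.Antisym F) (hf0a : G.Antisym f0)
    {s : ℕ} (hinfl : ∀ l : Fin (k+1), s < (l:ℕ) → G.inflow F (p l) = G.inflow f0 (p l))
    (j : Fin k) (hsj : s ≤ (j:ℕ)) :
    (F (dP j) - f0 (dP j))
      + ∑ e ∈ (Finset.univ.filter
          (fun d => G.head d ∈ UFset p (j:ℕ) ∧ G.tail d ∉ UFset p (j:ℕ))).erase (dP j),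
          (F e - f0 e) = 0 := by
  classical
  have hanti : G.Antisym (fun d => F d - f0 d) := by
    intro d
    simp only []
    rw [hFa d, hf0a d]
    ring
  have hbal := G.bal hanti (UFset p (j:ℕ))
  have hzero : ∑ v ∈ UFset p (j:ℕ), G.inflow (fun d => F d - f0 d) v = 0 := by
    apply Finset.sum_eq_zero
    intro v hv
    obtain ⟨l, hl1, hl2⟩ := mem_UFset.mp hv
    subst hl2
    rw [G.inflow_sub]
    rw [hinfl l (by omega)]
    ring
  rw [hzero] at hbal
  rw [← Finset.add_sum_erase _ _ (dP_mem_cross G hp hdt hdh)] at hbal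
  exact hbal.symm

lemma entry_saturated (hc0 : ∀ d, 0 ≤ c0 d) (hM : M = ∑ d : D, c0 d)
    {F f0 : D → ℝ} (hFa : G.Antisym F) (hf0a : G.Antisym f0) (hf0le : ∀ d, f0 d ≤ c0 d)
    {s : ℕ} (hFle : ∀ d, F d ≤ G.fixCaps c0 M dP s d)
    (hinfl : ∀ l : Fin (k+1), s < (l:ℕ) → G.inflow F (p l) = G.inflow f0 (p l))
    (j : Fin k) (hsj : s ≤ (j:ℕ))
    (hsat : G.fixCaps c0 M dP s (G.rev (dP j)) ≤ F (G.rev (dP j))) :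
    ∀ e, G.head e ∈ UFset p (j:ℕ) → G.tail e ∉ UFset p (j:ℕ) → e ≠ dP j →
      G.fixCaps c0 M dP s e ≤ F e := by
  classical
  set A := (Finset.univ.filter
      (fun d => G.head d ∈ UFset p (j:ℕ) ∧ G.tail d ∉ UFset p (j:ℕ))).erase (dP j) with hA
  have hbal := cross_balance G hp hdt hdh hFa hf0a hinfl j hsj
  -- every dart in A is an ordinary dart
  have hordA : ∀ e ∈ A, ∀ l : Fin k, e ≠ dP l ∧ e ≠ G.rev (dP l) := by
    intro e he
    rw [hA, Finset.mem_erase, Finset.mem_filter] at he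
    exact cross_ord G hp hdt hdh he.2.2.1 he.2.2.2 he.1
  have hcapsA : ∀ e ∈ A, G.fixCaps c0 M dP s e = c0 e ∧ G.fixCaps c0 M dP s (G.rev e) = c0 (G.rev e) := by
    intro e he
    constructor
    · exact G.fixCaps_eq_c0 (fun l _ => hordA e he l)
    · refine G.fixCaps_eq_c0 (fun l _ => ?_)
      constructor
      · intro hh
        exact ((hordA e he) l).2 (by rw [← hh, G.rev_rev])
      · intro hh
        exact ((hordA e he) l).1 (G.rev_inj hh)
  -- pointwise upper bound on A
  have hptwise : ∀ e ∈ A, F e - f0 e ≤ c0 e + c0 (G.rev e) := by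
    intro e he
    have h1 : F e ≤ c0 e := by
      have := hFle e
      rwa [(hcapsA e he).1] at this
    have h2 : - f0 e ≤ c0 (G.rev e) := by
      have := hf0le (G.rev e)
      rw [hf0a e] at this
      linarith
    linarith
  -- total capacity bound
  have hsumA : ∑ e ∈ A, (c0 e + c0 (G.rev e)) ≤ M := by
    rw [Finset.sum_add_distrib]
    have h1 : ∑ e ∈ A, c0 (G.rev e) = ∑ e ∈ A.image G.rev, c0 e := by
      rw [Finset.sum_image (fun a _ b _ h => G.rev_inj h)]
    have hdisj : Disjoint A (A.image G.rev) := by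
      rw [Finset.disjoint_left]
      intro d hd hd2
      obtain ⟨e, he, hee⟩ := Finset.mem_image.mp hd2
      rw [hA, Finset.mem_erase, Finset.mem_filter] at hd he
      apply he.2.2.2
      rw [← G.head_rev, hee]
      exact hd.2.2.1
    rw [h1, ← Finset.sum_union hdisj]
    rw [hM]
    exact Finset.sum_le_sum_of_subset_of_nonneg (Finset.subset_univ _)
      (fun i _ _ => hc0 i)
  -- the path dart term is at most -M
  have hterm : F (dP j) - f0 (dP j) ≤ -M := by
    have h1 : F (dP j) ≤ - (c0 (G.rev (dP j)) + M) := by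
      have h2 := hsat
      rw [G.fixCaps_path_rev j hsj] at h2
      have h3 : F (G.rev (dP j)) = - F (dP j) := hFa (dP j)
      linarith
    have h4 : - f0 (dP j) ≤ c0 (G.rev (dP j)) := by
      have := hf0le (G.rev (dP j))
      rw [hf0a (dP j)] at this
      linarith
    linarith
  -- squeeze
  have hsumAge : M ≤ ∑ e ∈ A, (F e - f0 e) := by linarith
  have hdiff : ∑ e ∈ A, ((c0 e + c0 (G.rev e)) - (F e - f0 e)) = 0 := by
    rw [Finset.sum_sub_distrib]
    have h5 : ∑ e ∈ A, (F e - f0 e) ≤ ∑ e ∈ A, (c0 e + c0 (G.rev e)) :=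
      Finset.sum_le_sum hptwise
    linarith
  have htight : ∀ e ∈ A, (c0 e + c0 (G.rev e)) - (F e - f0 e) = 0 := by
    intro e he
    have := (Finset.sum_eq_zero_iff_of_nonneg (fun e he => by
      have := hptwise e he; linarith)).mp hdiff
    exact this e he
  -- conclusion
  intro e hh ht hne
  have heA : e ∈ A := by
    rw [hA, Finset.mem_erase, Finset.mem_filter]
    exact ⟨hne, Finset.mem_univ e, hh, ht⟩
  have h6 := htight e heA
  have h7 : - f0 e ≤ c0 (G.rev e) := by
    have := hf0le (G.rev e)
    rw [hf0a e] at this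
    linarith
  rw [(hcapsA e heA).1]
  linarith

end Saturation

end Dgraph
namespace Dgraph

variable {V D : Type} [Fintype D] [DecidableEq V] [DecidableEq D]
variable (G : Dgraph V D)
set_option linter.unusedSectionVars false
variable {k : ℕ} {c0 : D → ℝ} {M : ℝ} {p : Fin (k+1) → V} {dP : Fin k → D}

section Saturation2

variable (hp : Function.Injective p)
  (hdt : ∀ i, G.tail (dP i) = p i.castSucc) (hdh : ∀ i, G.head (dP i) = p i.succ)

include hp hdt hdh

lemma exit_saturated (hc0 : ∀ d, 0 ≤ c0 d) (hM : M = ∑ d : D, c0 d)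
    {F f0 : D → ℝ} (hFa : G.Antisym F) (hf0a : G.Antisym f0) (hf0le : ∀ d, f0 d ≤ c0 d)
    {s : ℕ} (hFle : ∀ d, F d ≤ G.fixCaps c0 M dP s d)
    (hinfl : ∀ l : Fin (k+1), s < (l:ℕ) → G.inflow F (p l) = G.inflow f0 (p l))
    (j : Fin k) (hsj : s ≤ (j:ℕ))
    (hsat : G.fixCaps c0 M dP s (dP j) ≤ F (dP j)) :
    ∀ e, G.tail e ∈ UFset p (j:ℕ) → G.head e ∉ UFset p (j:ℕ) → e ≠ G.rev (dP j) →
      G.fixCaps c0 M dP s e ≤ F e := by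
  classical
  set A := (Finset.univ.filter
      (fun d => G.head d ∈ UFset p (j:ℕ) ∧ G.tail d ∉ UFset p (j:ℕ))).erase (dP j) with hA
  have hbal := cross_balance G hp hdt hdh hFa hf0a hinfl j hsj
  have hordA : ∀ e ∈ A, ∀ l : Fin k, e ≠ dP l ∧ e ≠ G.rev (dP l) := by
    intro e he
    rw [hA, Finset.mem_erase, Finset.mem_filter] at he
    exact cross_ord G hp hdt hdh he.2.2.1 he.2.2.2 he.1
  have hcapsA : ∀ e ∈ A, G.fixCaps c0 M dP s e = c0 e ∧ G.fixCaps c0 M dP s (G.rev e) = c0 (G.rev e) := by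
    intro e he
    constructor
    · exact G.fixCaps_eq_c0 (fun l _ => hordA e he l)
    · refine G.fixCaps_eq_c0 (fun l _ => ?_)
      constructor
      · intro hh
        exact ((hordA e he) l).2 (by rw [← hh, G.rev_rev])
      · intro hh
        exact ((hordA e he) l).1 (G.rev_inj hh)
  have hptwise : ∀ e ∈ A, -(c0 e + c0 (G.rev e)) ≤ F e - f0 e := by
    intro e he
    have h1 : - c0 (G.rev e) ≤ F e := by
      have h2 := hFle (G.rev e)
      rw [(hcapsA e he).2] at h2
      have h3 : F (G.rev e) = - F e := hFa e
      linarith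
    have h2 : f0 e ≤ c0 e := hf0le e
    linarith
  have hsumA : ∑ e ∈ A, (c0 e + c0 (G.rev e)) ≤ M := by
    rw [Finset.sum_add_distrib]
    have h1 : ∑ e ∈ A, c0 (G.rev e) = ∑ e ∈ A.image G.rev, c0 e := by
      rw [Finset.sum_image (fun a _ b _ h => G.rev_inj h)]
    have hdisj : Disjoint A (A.image G.rev) := by
      rw [Finset.disjoint_left]
      intro d hd hd2
      obtain ⟨e, he, hee⟩ := Finset.mem_image.mp hd2
      rw [hA, Finset.mem_erase, Finset.mem_filter] at hd he
      apply he.2.2.2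
      rw [← G.head_rev, hee]
      exact hd.2.2.1
    rw [h1, ← Finset.sum_union hdisj]
    rw [hM]
    exact Finset.sum_le_sum_of_subset_of_nonneg (Finset.subset_univ _)
      (fun i _ _ => hc0 i)
  have hterm : M ≤ F (dP j) - f0 (dP j) := by
    have h1 := hsat
    rw [G.fixCaps_path j hsj] at h1
    have h2 : f0 (dP j) ≤ c0 (dP j) := hf0le (dP j)
    linarith
  have hsumAle : ∑ e ∈ A, (F e - f0 e) ≤ -M := by linarith
  have hdiff : ∑ e ∈ A, ((F e - f0 e) + (c0 e + c0 (G.rev e))) = 0 := by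
    rw [Finset.sum_add_distrib]
    have h5 : ∑ e ∈ A, (-(c0 e + c0 (G.rev e))) ≤ ∑ e ∈ A, (F e - f0 e) :=
      Finset.sum_le_sum hptwise
    rw [Finset.sum_neg_distrib] at h5
    linarith
  have htight : ∀ e ∈ A, (F e - f0 e) + (c0 e + c0 (G.rev e)) = 0 := by
    intro e he
    have := (Finset.sum_eq_zero_iff_of_nonneg (fun e he => by
      have := hptwise e he; linarith)).mp hdiff
    exact this e he
  -- darts in A have their reverses saturated
  have hrevsat : ∀ e ∈ A, G.fixCaps c0 M dP s (G.rev e) ≤ F (G.rev e) := by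
    intro e he
    have h6 := htight e he
    have h7 : f0 e ≤ c0 e := hf0le e
    have h8 : F (G.rev e) = - F e := hFa e
    rw [(hcapsA e he).2]
    linarith
  -- conclusion
  intro e hh ht hne
  have heA : G.rev e ∈ A := by
    rw [hA, Finset.mem_erase, Finset.mem_filter]
    refine ⟨?_, Finset.mem_univ _, ?_, ?_⟩
    · intro hc
      exact hne (by rw [← G.rev_rev e, hc])
    · rw [G.head_rev]; exact hh
    · rw [G.tail_rev]; exact ht
  have := hrevsat (G.rev e) heA
  rwa [G.rev_rev] at this

end Saturation2

end Dgraph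
namespace Dgraph

variable {V D : Type} [Fintype D] [DecidableEq V] [DecidableEq D]
variable (G : Dgraph V D)
set_option linter.unusedSectionVars false
variable {k : ℕ} {c0 : D → ℝ} {M : ℝ} {p : Fin (k+1) → V} {dP : Fin k → D}

section Descend

variable (hp : Function.Injective p)
  (hdt : ∀ i, G.tail (dP i) = p i.castSucc) (hdh : ∀ i, G.head (dP i) = p i.succ)
  (hc0 : ∀ d, 0 ≤ c0 d) (hM : M = ∑ d : D, c0 d)

include hp hdt hdh hc0 hM

lemma descend_pos {F f0 : D → ℝ} (hFa : G.Antisym F) (hf0a : G.Antisym f0)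
    (hf0le : ∀ d, f0 d ≤ c0 d)
    {s : ℕ} (hsk : s ≤ k) (hFle : ∀ d, F d ≤ G.fixCaps c0 M dP s d)
    (hinfl : ∀ l : Fin (k+1), s < (l:ℕ) → G.inflow F (p l) = G.inflow f0 (p l))
    {u : V} (hu : ∀ l : Fin (k+1), s < (l:ℕ) → u ≠ p l) :
    ∀ l : Fin (k+1), s ≤ (l:ℕ) →
      G.ResReach (fun d => G.fixCaps c0 M dP s d - F d) u (p l) →
      G.ResReach (fun d => G.fixCaps c0 M dP s d - F d) u (p ⟨s, by omega⟩) := by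
  set r : D → ℝ := fun d => G.fixCaps c0 M dP s d - F d with hr
  suffices h : ∀ n : ℕ, ∀ l : Fin (k+1), (l:ℕ) = n → s ≤ n →
      G.ResReach r u (p l) → G.ResReach r u (p ⟨s, by omega⟩) by
    intro l hsl hreach
    exact h (l:ℕ) l rfl hsl hreach
  intro n
  induction n using Nat.strong_induction_on with
  | _ n ih =>
    intro l hln hsn hreach
    by_cases heq : (l:ℕ) = s
    · have : l = ⟨s, by omega⟩ := Fin.ext heq
      rwa [this] at hreach
    · have hslt : s < (l:ℕ) := by omega
      have hjlt : (l:ℕ) - 1 < k := by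
        have := l.isLt
        omega
      set j : Fin k := ⟨(l:ℕ) - 1, hjlt⟩ with hj
      have hjsucc : j.succ = l := by
        apply Fin.ext
        simp only [Fin.val_succ, hj]
        omega
      have hsj : s ≤ (j:ℕ) := by
        simp only [hj]
        omega
      have hnext : G.ResReach r u (p j.castSucc) := by
        by_cases hrev : 0 < r (G.rev (dP j))
        · refine Relation.ReflTransGen.tail hreach ⟨G.rev (dP j), ?_, ?_, hrev⟩
          · rw [G.tail_rev, hdh j, hjsucc]
          · rw [G.head_rev, hdt j]
        · -- the reverse dart is saturated: any entry into U_j goes through dP j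
          have hsat : G.fixCaps c0 M dP s (G.rev (dP j)) ≤ F (G.rev (dP j)) := by
            simp only [hr] at hrev
            linarith [not_lt.mp hrev]
          have hent := entry_saturated G hp hdt hdh hc0 hM hFa hf0a hf0le hFle hinfl j hsj hsat
          have hucross := G.cross_of_reach_entry (fun v => v ∈ UFset p (j:ℕ))
            hreach ?_ ?_
          · obtain ⟨d, k1, k2, k3, k4⟩ := hucross
            by_cases hd : d = dP j
            · subst hd
              rwa [hdt j] at k4
            · exfalso
              have := hent d k3 k2 hd
              simp only [hr] at k1
              linarith
          · intro hmem
            obtain ⟨l', hl1, hl2⟩ := mem_UFset.mp hmem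
            exact hu l' (by omega) hl2.symm
          · show p l ∈ UFset p (j:ℕ)
            rw [p_mem_UFset G hp hdt hdh]
            simp only [hj]
            omega
      have hcast : ((j.castSucc : Fin (k+1)) : ℕ) = (l:ℕ) - 1 := by
        simp [hj]
      exact ih ((l:ℕ) - 1) (by omega) j.castSucc hcast (by omega) hnext

lemma descend_neg {F f0 : D → ℝ} (hFa : G.Antisym F) (hf0a : G.Antisym f0)
    (hf0le : ∀ d, f0 d ≤ c0 d)
    {s : ℕ} (hsk : s ≤ k) (hFle : ∀ d, F d ≤ G.fixCaps c0 M dP s d)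
    (hinfl : ∀ l : Fin (k+1), s < (l:ℕ) → G.inflow F (p l) = G.inflow f0 (p l))
    {z : V} (hz : ∀ l : Fin (k+1), s < (l:ℕ) → z ≠ p l) :
    ∀ l : Fin (k+1), s ≤ (l:ℕ) →
      G.ResReach (fun d => G.fixCaps c0 M dP s d - F d) (p l) z →
      G.ResReach (fun d => G.fixCaps c0 M dP s d - F d) (p ⟨s, by omega⟩) z := by
  set r : D → ℝ := fun d => G.fixCaps c0 M dP s d - F d with hr
  suffices h : ∀ n : ℕ, ∀ l : Fin (k+1), (l:ℕ) = n → s ≤ n →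
      G.ResReach r (p l) z → G.ResReach r (p ⟨s, by omega⟩) z by
    intro l hsl hreach
    exact h (l:ℕ) l rfl hsl hreach
  intro n
  induction n using Nat.strong_induction_on with
  | _ n ih =>
    intro l hln hsn hreach
    by_cases heq : (l:ℕ) = s
    · have : l = ⟨s, by omega⟩ := Fin.ext heq
      rwa [this] at hreach
    · have hslt : s < (l:ℕ) := by omega
      have hjlt : (l:ℕ) - 1 < k := by
        have := l.isLt
        omega
      set j : Fin k := ⟨(l:ℕ) - 1, hjlt⟩ with hj
      have hjsucc : j.succ = l := by
        apply Fin.ext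
        simp only [Fin.val_succ, hj]
        omega
      have hsj : s ≤ (j:ℕ) := by
        simp only [hj]
        omega
      have hnext : G.ResReach r (p j.castSucc) z := by
        by_cases hfwd : 0 < r (dP j)
        · refine Relation.ReflTransGen.head ⟨dP j, ?_, ?_, hfwd⟩ hreach
          · rw [hdt j]
          · rw [hdh j, hjsucc]
        · have hsat : G.fixCaps c0 M dP s (dP j) ≤ F (dP j) := by
            simp only [hr] at hfwd
            linarith [not_lt.mp hfwd]
          have hext := exit_saturated G hp hdt hdh hc0 hM hFa hf0a hf0le hFle hinfl j hsj hsat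
          have hucross := G.cross_of_reach_exit (fun v => v ∈ UFset p (j:ℕ))
            hreach ?_ ?_
          · obtain ⟨d, k1, k2, k3, k4⟩ := hucross
            by_cases hd : d = G.rev (dP j)
            · subst hd
              rwa [G.head_rev, hdt j] at k4
            · exfalso
              have := hext d k2 k3 hd
              simp only [hr] at k1
              linarith
          · show p l ∈ UFset p (j:ℕ)
            rw [p_mem_UFset G hp hdt hdh]
            simp only [hj]
            omega
          · intro hmem
            obtain ⟨l', hl1, hl2⟩ := mem_UFset.mp hmem
            exact hz l' (by omega) hl2.symm
      have hcast : ((j.castSucc : Fin (k+1)) : ℕ) = (l:ℕ) - 1 := by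
        simp [hj]
      exact ih ((l:ℕ) - 1) (by omega) j.castSucc hcast (by omega) hnext

end Descend

end Dgraph
namespace Dgraph

variable {V D : Type} [Fintype D] [DecidableEq V] [DecidableEq D]
variable (G : Dgraph V D)
set_option linter.unusedSectionVars false

lemma truncAt_d0 (κ f : D → ℝ) (d0 : D) (hne : G.rev d0 ≠ d0) :
    G.truncAt κ f d0 d0 = - min (- min (f d0) (κ d0)) (κ (G.rev d0)) := by
  unfold truncAt
  simp only [Function.update_self, Function.update_of_ne hne]

lemma truncAt_rev (κ f : D → ℝ) (d0 : D) (hne : G.rev d0 ≠ d0) :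
    G.truncAt κ f d0 (G.rev d0) = min (- min (f d0) (κ d0)) (κ (G.rev d0)) := by
  unfold truncAt
  simp only [Function.update_self, Function.update_of_ne hne]

lemma truncAt_other (κ f : D → ℝ) (d0 : D) (hne : G.rev d0 ≠ d0)
    {d : D} (h1 : d ≠ d0) (h2 : d ≠ G.rev d0) :
    G.truncAt κ f d0 d = f d := by
  unfold truncAt
  simp only [Function.update_self, Function.update_of_ne hne,
    Function.update_of_ne h1, Function.update_of_ne h2]

end Dgraph
namespace Dgraph

variable {V D : Type} [Fintype D] [DecidableEq V] [DecidableEq D]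
variable (G : Dgraph V D)
set_option linter.unusedSectionVars false

section Trunc

variable {κ f : D → ℝ} {d0 : D} (hne : G.rev d0 ≠ d0)

include hne

lemma truncAt_antisym (hfa : G.Antisym f) : G.Antisym (G.truncAt κ f d0) := by
  intro d
  by_cases h1 : d = d0
  · rw [h1, G.truncAt_rev κ f d0 hne, G.truncAt_d0 κ f d0 hne, neg_neg]
  · by_cases h2 : d = G.rev d0
    · rw [h2, G.rev_rev, G.truncAt_d0 κ f d0 hne, G.truncAt_rev κ f d0 hne]
    · have h3 : G.rev d ≠ d0 := by
        intro hc
        exact h2 (by rw [← hc, G.rev_rev])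
      have h4 : G.rev d ≠ G.rev d0 := fun hc => h1 (G.rev_inj hc)
      rw [G.truncAt_other κ f d0 hne h3 h4, G.truncAt_other κ f d0 hne h1 h2]
      exact hfa d

lemma truncAt_le (hκ : 0 ≤ κ d0 + κ (G.rev d0))
    (hf : ∀ d, d ≠ d0 → d ≠ G.rev d0 → f d ≤ κ d) :
    ∀ d, G.truncAt κ f d0 d ≤ κ d := by
  intro d
  by_cases h1 : d = d0
  · rw [h1, G.truncAt_d0 κ f d0 hne]
    rcases min_cases (- min (f d0) (κ d0)) (κ (G.rev d0)) with ⟨h5, _⟩ | ⟨h5, _⟩ <;> rw [h5]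
    · rw [neg_neg]
      exact min_le_right _ _
    · linarith
  · by_cases h2 : d = G.rev d0
    · rw [h2, G.truncAt_rev κ f d0 hne]
      exact min_le_right _ _
    · rw [G.truncAt_other κ f d0 hne h1 h2]
      exact hf d h1 h2

lemma truncAt_resmono {capOld : D → ℝ} {M : ℝ} (hM0 : 0 ≤ M)
    (h1 : capOld d0 = κ d0 + M) (h2 : capOld (G.rev d0) = κ (G.rev d0) + M)
    (h3 : ∀ d, d ≠ d0 → d ≠ G.rev d0 → capOld d = κ d)
    (hfa : G.Antisym f) :
    ∀ d, 0 < κ d - G.truncAt κ f d0 d → 0 < capOld d - f d := by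
  intro d hd
  by_cases hd1 : d = d0
  · rw [hd1] at hd ⊢
    rw [G.truncAt_d0 κ f d0 hne] at hd
    have ht : min (f d0) (κ d0) ≤ - min (- min (f d0) (κ d0)) (κ (G.rev d0)) := by
      have h6 := min_le_left (- min (f d0) (κ d0)) (κ (G.rev d0))
      linarith
    have h4 : min (f d0) (κ d0) < κ d0 := by linarith
    have h5 : f d0 < κ d0 := by
      rcases min_lt_iff.mp h4 with h | h
      · exact h
      · linarith
    rw [h1]
    linarith
  · by_cases hd2 : d = G.rev d0
    · rw [hd2] at hd ⊢
      rw [G.truncAt_rev κ f d0 hne] at hd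
      rcases min_cases (- min (f d0) (κ d0)) (κ (G.rev d0)) with ⟨h5, h6⟩ | ⟨h5, h6⟩ <;>
        rw [h5] at hd
      · have h7 : f (G.rev d0) = - f d0 := hfa d0
        have h8 := min_le_left (f d0) (κ d0)
        rw [h2]
        linarith
      · linarith
    · rw [G.truncAt_other κ f d0 hne hd1 hd2] at hd
      rw [h3 d hd1 hd2]
      exact hd

lemma truncAt_inflow (v : V) (hv1 : G.head d0 ≠ v) (hv2 : G.tail d0 ≠ v) :
    G.inflow (G.truncAt κ f d0) v = G.inflow f v := by
  apply G.inflow_congr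
  intro d hd
  apply G.truncAt_other κ f d0 hne
  · intro hc
    subst hc
    exact hv1 hd
  · intro hc
    subst hc
    rw [G.head_rev] at hd
    exact hv2 hd

end Trunc

end Dgraph
namespace Dgraph

variable {V D : Type} [Fintype D] [DecidableEq V] [DecidableEq D]

set_option linter.unusedSectionVars false
set_option maxHeartbeats 1000000

/-- invariant of the fixing procedure after `m` stages -/
structure FixInv (G : Dgraph V D) (c0 : D → ℝ) (M : ℝ) (k : ℕ) (p : Fin (k+1) → V)
    (dP : Fin k → D) (f0 : D → ℝ) (f : ℕ → D → ℝ) (m : ℕ) : Prop where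
  anti : G.Antisym (f m)
  le : ∀ d, f m d ≤ G.fixCaps c0 M dP m d
  untouched : ∀ v, (∀ l : Fin (k+1), (l:ℕ) ≤ m → p l ≠ v) →
    G.inflow (f m) v = G.inflow f0 v
  settled : ∀ i : Fin k, (i:ℕ) < m →
    G.inflow (f m) (p i.castSucc) = G.inflow (f ((i:ℕ)+1)) (p i.castSucc)
  posSep : ∀ i : Fin k, (i:ℕ) < m → 0 < G.inflow (f ((i:ℕ)+1)) (p i.castSucc) →
    ∀ l : Fin (k+1), m ≤ (l:ℕ) →
      ¬ G.ResReach (fun d => G.fixCaps c0 M dP m d - f m d) (p i.castSucc) (p l)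
  negSep : ∀ i : Fin k, (i:ℕ) < m → G.inflow (f ((i:ℕ)+1)) (p i.castSucc) < 0 →
    ∀ l : Fin (k+1), m ≤ (l:ℕ) →
      ¬ G.ResReach (fun d => G.fixCaps c0 M dP m d - f m d) (p l) (p i.castSucc)
  crossSep : ∀ i i' : Fin k, (i:ℕ) < m → (i':ℕ) < m →
    0 < G.inflow (f ((i:ℕ)+1)) (p i.castSucc) →
    G.inflow (f ((i':ℕ)+1)) (p i'.castSucc) < 0 →
    ¬ G.ResReach (fun d => G.fixCaps c0 M dP m d - f m d) (p i.castSucc) (p i'.castSucc)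

variable {G : Dgraph V D} {c0 : D → ℝ} {M : ℝ} {k : ℕ} {p : Fin (k+1) → V}
  {dP : Fin k → D} {f0 : D → ℝ} {f : ℕ → D → ℝ}

lemma fixinv_zero (hc0 : ∀ d, 0 ≤ c0 d) (hM : M = ∑ d : D, c0 d)
    (hf0 : G.Pseudoflow c0 f0) (hinit : f 0 = f0) :
    FixInv G c0 M k p dP f0 f 0 := by
  have hM0 : 0 ≤ M := by
    rw [hM]
    exact Finset.sum_nonneg (fun d _ => hc0 d)
  refine ⟨?_, ?_, ?_, ?_, ?_, ?_, ?_⟩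
  · rw [hinit]; exact hf0.1
  · intro d
    rw [hinit]
    exact le_trans (hf0.2 d) (G.fixCaps_ge hM0 0 d)
  · intro v _
    rw [hinit]
  · intro i hi; omega
  · intro i hi; omega
  · intro i hi; omega
  · intro i i' hi; omega

lemma fixinv_step (hc0 : ∀ d, 0 ≤ c0 d) (hM : M = ∑ d : D, c0 d)
    (hp : Function.Injective p)
    (hdt : ∀ i, G.tail (dP i) = p i.castSucc) (hdh : ∀ i, G.head (dP i) = p i.succ)
    (hf0 : G.Pseudoflow c0 f0)
    {m : ℕ} (hm : m < k)
    (hstep : G.FixStep c0 M p dP ⟨m, hm⟩ (f m) (f (m+1)))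
    (inv : FixInv G c0 M k p dP f0 f m) :
    FixInv G c0 M k p dP f0 f (m+1) := by
  classical
  have hM0 : 0 ≤ M := by
    rw [hM]
    exact Finset.sum_nonneg (fun d _ => hc0 d)
  obtain ⟨t, g, ht, hcase, hf'⟩ := hstep
  set im : Fin k := ⟨m, hm⟩ with him
  have himv : (im : ℕ) = m := rfl
  simp only [himv] at ht hcase
  have hpne : ∀ (l l' : Fin (k+1)), (l:ℕ) ≠ (l':ℕ) → p l ≠ p l' := by
    intro l l' hne hc
    exact hne (by rw [hp hc])
  have hab : p im.castSucc ≠ p im.succ :=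
    hpne _ _ (by simp only [Fin.coe_castSucc, Fin.val_succ, himv]; omega)
  have hrevne : G.rev (dP im) ≠ dP im := rev_dP_ne_self G hp hdt hdh im
  -- facts about the truncated flow
  have t_anti : G.Antisym t := by
    rw [ht]
    exact G.truncAt_antisym hrevne inv.anti
  have hcd0 : G.fixCaps c0 M dP (m+1) (dP im) = c0 (dP im) := by
    apply G.fixCaps_eq_c0
    intro j hj
    constructor
    · intro hc
      have h3 := dP_inj G hp hdt hdh hc
      rw [← h3, himv] at hj
      omega
    · exact dP_ne_rev G hp hdt hdh im j
  have hcrev : G.fixCaps c0 M dP (m+1) (G.rev (dP im)) = c0 (G.rev (dP im)) := by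
    apply G.fixCaps_eq_c0
    intro j hj
    constructor
    · intro hc
      exact (dP_ne_rev G hp hdt hdh j im) (by rw [← hc])
    · intro hc
      have h3 := G.rev_inj hc
      have h2 := dP_inj G hp hdt hdh h3
      rw [← h2, himv] at hj
      omega
  have hcap_eq : ∀ d, d ≠ dP im → d ≠ G.rev (dP im) →
      G.fixCaps c0 M dP m d = G.fixCaps c0 M dP (m+1) d := by
    intro d h1 h2
    have h3 := fixCaps_succ_eq G (c0 := c0) (M := M) hp hdt hdh im h1 h2
    rw [himv] at h3
    exact h3.symm
  have t_le : ∀ d, t d ≤ G.fixCaps c0 M dP (m+1) d := by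
    rw [ht]
    apply G.truncAt_le hrevne
    · have h1 := G.fixCaps_nonneg (c0 := c0) (M := M) (dP := dP) hc0 hM0 (m+1) (dP im)
      have h2 := G.fixCaps_nonneg (c0 := c0) (M := M) (dP := dP) hc0 hM0 (m+1) (G.rev (dP im))
      linarith
    · intro d h1 h2
      rw [← hcap_eq d h1 h2]
      exact inv.le d
  have t_resmono : ∀ d, 0 < G.fixCaps c0 M dP (m+1) d - t d →
      0 < G.fixCaps c0 M dP m d - f m d := by
    rw [ht]
    apply G.truncAt_resmono hrevne hM0
    · rw [hcd0]
      exact G.fixCaps_path im (by omega)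
    · rw [hcrev]
      exact G.fixCaps_path_rev im (by omega)
    · intro d h1 h2
      exact hcap_eq d h1 h2
    · exact inv.anti
  have hreach_mono_tm : ∀ {u v : V},
      G.ResReach (fun d => G.fixCaps c0 M dP (m+1) d - t d) u v →
      G.ResReach (fun d => G.fixCaps c0 M dP m d - f m d) u v :=
    fun hr => G.reach_mono t_resmono hr
  have t_inflow : ∀ v, v ≠ p im.castSucc → v ≠ p im.succ →
      G.inflow t v = G.inflow (f m) v := by
    intro v hva hvb
    rw [ht]
    apply G.truncAt_inflow hrevne
    · rw [hdh im]
      exact fun hc => hvb hc.symm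
    · rw [hdt im]
      exact fun hc => hva hc.symm
  -- uniform data of the push
  have hganti : G.Antisym g := by
    rcases hcase with ⟨_, h⟩ | ⟨_, h⟩ <;> exact h.1
  have hgle : ∀ d, g d ≤ G.fixCaps c0 M dP (m+1) d - t d := by
    rcases hcase with ⟨_, h⟩ | ⟨_, h⟩ <;> exact h.2.1
  have hgcons : ∀ v, v ≠ p im.castSucc → v ≠ p im.succ → G.inflow g v = 0 := by
    rcases hcase with ⟨_, h⟩ | ⟨_, h⟩
    · exact h.2.2.1
    · exact fun v hva hvb => h.2.2.1 v hvb hva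
  have hgab : G.inflow g (p im.castSucc) + G.inflow g (p im.succ) = 0 :=
    G.inflow_total hganti hab hgcons
  -- shape of the new residual function
  have hrshape' : ∀ d, G.fixCaps c0 M dP (m+1) d - f (m+1) d
      = (G.fixCaps c0 M dP (m+1) d - t d) - g d := by
    intro d
    simp only [hf']
    ring
  have hrfun : (fun d => G.fixCaps c0 M dP (m+1) d - f (m+1) d)
      = fun d => (G.fixCaps c0 M dP (m+1) d - t d) - g d := funext hrshape'
  -- new flow basic facts
  have f'_anti : G.Antisym (f (m+1)) := by
    rw [hf']
    intro d
    simp only []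
    rw [t_anti d, hganti d]
    ring
  have f'_le : ∀ d, f (m+1) d ≤ G.fixCaps c0 M dP (m+1) d := by
    intro d
    rw [hf']
    simp only []
    have h1 := hgle d
    have h2 := t_le d
    linarith
  -- push preservation of closed sets
  have hpushS : ∀ (S : Set V),
      (∀ d, G.tail d ∈ S → G.head d ∉ S → G.fixCaps c0 M dP (m+1) d - t d ≤ 0) →
      ((p im.castSucc ∈ S) ↔ (p im.succ ∈ S)) →
      ∀ {u z : V}, G.ResReach (fun d => G.fixCaps c0 M dP (m+1) d - f (m+1) d) u z →
        u ∈ S → z ∈ S := by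
    intro S hcl hmem u z hr hu
    refine G.reach_stay S ?_ hr hu
    intro d h1 h2
    rw [hrshape' d]
    exact G.push_saturates hganti hgle hab hgcons S hcl hmem d h1 h2
  -- untouched nodes
  have huntouched : ∀ v, (∀ l : Fin (k+1), (l:ℕ) ≤ m+1 → p l ≠ v) →
      G.inflow (f (m+1)) v = G.inflow f0 v := by
    intro v h
    have hva : v ≠ p im.castSucc := fun hc =>
      h im.castSucc (by simp [himv]) hc.symm
    have hvb : v ≠ p im.succ := fun hc =>
      h im.succ (by simp [himv]) hc.symm
    rw [hf', G.inflow_add, hgcons v hva hvb, add_zero, t_inflow v hva hvb]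
    exact inv.untouched v (fun l hl => h l (by omega))
  -- old inflows are unchanged
  have hinfl_old : ∀ v, v ≠ p im.castSucc → v ≠ p im.succ →
      G.inflow (f (m+1)) v = G.inflow (f m) v := by
    intro v hva hvb
    rw [hf', G.inflow_add, hgcons v hva hvb, add_zero, t_inflow v hva hvb]
  have hsettled : ∀ i : Fin k, (i:ℕ) < m+1 →
      G.inflow (f (m+1)) (p i.castSucc) = G.inflow (f ((i:ℕ)+1)) (p i.castSucc) := by
    intro i hi
    rcases Nat.lt_or_ge (i:ℕ) m with hilt | hige
    · have hva : p i.castSucc ≠ p im.castSucc :=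
        hpne _ _ (by simp only [Fin.coe_castSucc, himv]; omega)
      have hvb : p i.castSucc ≠ p im.succ :=
        hpne _ _ (by simp only [Fin.coe_castSucc, Fin.val_succ, himv]; omega)
      rw [hinfl_old _ hva hvb]
      exact inv.settled i hilt
    · have h2 : i = im := Fin.ext (by omega)
      rw [h2]
  -- the inflow at the current node after the push
  have hema : G.inflow (f (m+1)) (p im.castSucc)
      = G.inflow t (p im.castSucc) + G.inflow g (p im.castSucc) := by
    rw [hf', G.inflow_add]
  -- reachability set of an old positive node survives the push
  have hSpos : ∀ (i : Fin k), (i:ℕ) < m → 0 < G.inflow (f ((i:ℕ)+1)) (p i.castSucc) →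
      ∀ z : V, G.ResReach (fun d => G.fixCaps c0 M dP (m+1) d - f (m+1) d) (p i.castSucc) z →
      G.ResReach (fun d => G.fixCaps c0 M dP (m+1) d - t d) (p i.castSucc) z := by
    intro i hi hpos z hz
    set S : Set V := {v | G.ResReach (fun d => G.fixCaps c0 M dP (m+1) d - t d)
      (p i.castSucc) v} with hS
    have hcl : ∀ d, G.tail d ∈ S → G.head d ∉ S → G.fixCaps c0 M dP (m+1) d - t d ≤ 0 := by
      intro d h1 h2
      by_contra hlt
      push_neg at hlt
      exact h2 (Relation.ReflTransGen.tail h1 ⟨d, rfl, rfl, hlt⟩)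
    have hfutS : ∀ l : Fin (k+1), m ≤ (l:ℕ) → p l ∉ S := by
      intro l hl hmem2
      exact inv.posSep i hi hpos l hl (hreach_mono_tm hmem2)
    have hmem : (p im.castSucc ∈ S ↔ p im.succ ∈ S) := by
      constructor
      · intro h
        exact absurd h (hfutS im.castSucc (by simp [himv]))
      · intro h
        exact absurd h (hfutS im.succ (by simp [himv]))
    exact hpushS S hcl hmem hz Relation.ReflTransGen.refl
  -- co-reachability of an old negative node survives the push
  have hSneg : ∀ (i' : Fin k), (i':ℕ) < m →
      G.inflow (f ((i':ℕ)+1)) (p i'.castSucc) < 0 →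
      ∀ u : V, ¬ G.ResReach (fun d => G.fixCaps c0 M dP (m+1) d - t d) u (p i'.castSucc) →
      ¬ G.ResReach (fun d => G.fixCaps c0 M dP (m+1) d - f (m+1) d) u (p i'.castSucc) := by
    intro i' hi' hneg u hu hreach
    set S : Set V := {v | ¬ G.ResReach (fun d => G.fixCaps c0 M dP (m+1) d - t d)
      v (p i'.castSucc)} with hS
    have hcl : ∀ d, G.tail d ∈ S → G.head d ∉ S → G.fixCaps c0 M dP (m+1) d - t d ≤ 0 := by
      intro d h1 h2
      by_contra hlt
      push_neg at hlt
      have h3 : G.ResReach (fun d => G.fixCaps c0 M dP (m+1) d - t d)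
          (G.head d) (p i'.castSucc) := not_not.mp h2
      exact h1 (Relation.ReflTransGen.head ⟨d, rfl, rfl, hlt⟩ h3)
    have hmem : (p im.castSucc ∈ S ↔ p im.succ ∈ S) := by
      have h1 : p im.castSucc ∈ S := fun hc =>
        inv.negSep i' hi' hneg im.castSucc (by simp [himv]) (hreach_mono_tm hc)
      have h2 : p im.succ ∈ S := fun hc =>
        inv.negSep i' hi' hneg im.succ (by simp [himv]) (hreach_mono_tm hc)
      exact iff_of_true h1 h2
    have h4 : p i'.castSucc ∈ S := hpushS S hcl hmem hreach hu
    exact h4 Relation.ReflTransGen.refl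
  -- assemble the new invariant
  refine ⟨f'_anti, f'_le, huntouched, hsettled, ?_, ?_, ?_⟩
  · -- posSep
    intro i hi hpos l hl
    rcases Nat.lt_or_ge (i:ℕ) m with hilt | hige
    · intro hreach
      exact inv.posSep i hilt hpos l (by omega)
        (hreach_mono_tm (hSpos i hilt hpos (p l) hreach))
    · have h2 : i = im := Fin.ext (by omega)
      subst h2
      rcases hcase with ⟨hx, hml⟩ | ⟨hx, hml⟩
      · -- pushed from p_m to p_{m+1}, leftover positive inflow
        have hglim := hml.2.2.2.1
        have hgabe : G.inflow g (p im.castSucc) = - G.inflow g (p im.succ) := by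
          linarith
        have hunder : G.inflow g (p im.succ) < G.inflow t (p im.castSucc) := by
          have h3 := hpos
          rw [hema, hgabe] at h3
          linarith
        have hnoab : ¬ G.ResReach
            (fun d => G.fixCaps c0 M dP (m+1) d - f (m+1) d)
            (p im.castSucc) (p im.succ) := by
          have h5 := G.maxlim_no_residual hml hab hunder
          rw [← hrfun] at h5
          exact h5
        intro hreach
        have hdesc := descend_pos G hp hdt hdh hc0 hM f'_anti hf0.1 hf0.2
          (s := m+1) (by omega) f'_le
          (fun l' hl' => huntouched (p l') (fun l'' hl'' =>
            hpne l'' l' (by omega)))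
          (u := p im.castSucc)
          (fun l' hl' => hpne im.castSucc l' (by simp only [Fin.coe_castSucc, himv]; omega))
          l (by omega) hreach
        have hfin : (⟨m+1, by omega⟩ : Fin (k+1)) = im.succ :=
          Fin.ext (by simp [himv])
        rw [hfin] at hdesc
        exact hnoab hdesc
      · -- pushed towards p_m: the inflow at p_m cannot be positive
        exfalso
        have hglim := hml.2.2.2.1
        have h3 := hpos
        rw [hema] at h3
        linarith
  · -- negSep
    intro i hi hneg l hl
    rcases Nat.lt_or_ge (i:ℕ) m with hilt | hige
    · apply hSneg i hilt hneg (p l)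
      intro hc
      exact inv.negSep i hilt hneg l (by omega) (hreach_mono_tm hc)
    · have h2 : i = im := Fin.ext (by omega)
      subst h2
      rcases hcase with ⟨hx, hml⟩ | ⟨hx, hml⟩
      · -- pushed from p_m: the inflow at p_m cannot be negative
        exfalso
        have hglim := hml.2.2.2.1
        have h3 := hneg
        rw [hema] at h3
        have h4 : G.inflow g (p im.castSucc) = - G.inflow g (p im.succ) := by
          linarith
        rw [h4] at h3
        linarith
      · -- pushed towards p_m, leftover negative inflow
        have hglim := hml.2.2.2.1
        have hunder : G.inflow g (p im.castSucc) < - G.inflow t (p im.castSucc) := by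
          have h3 := hneg
          rw [hema] at h3
          linarith
        have hnoba : ¬ G.ResReach
            (fun d => G.fixCaps c0 M dP (m+1) d - f (m+1) d)
            (p im.succ) (p im.castSucc) := by
          have h5 := G.maxlim_no_residual hml (Ne.symm hab) hunder
          rw [← hrfun] at h5
          exact h5
        intro hreach
        have hdesc := descend_neg G hp hdt hdh hc0 hM f'_anti hf0.1 hf0.2
          (s := m+1) (by omega) f'_le
          (fun l' hl' => huntouched (p l') (fun l'' hl'' =>
            hpne l'' l' (by omega)))
          (z := p im.castSucc)
          (fun l' hl' => hpne im.castSucc l' (by simp only [Fin.coe_castSucc, himv]; omega))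
          l (by omega) hreach
        have hfin : (⟨m+1, by omega⟩ : Fin (k+1)) = im.succ :=
          Fin.ext (by simp [himv])
        rw [hfin] at hdesc
        exact hnoba hdesc
  · -- crossSep
    intro i i' hi hi' hpos hneg
    rcases Nat.lt_or_ge (i':ℕ) m with hilt' | hige'
    · -- old negative target
      apply hSneg i' hilt' hneg (p i.castSucc)
      intro hc
      rcases Nat.lt_or_ge (i:ℕ) m with hilt | hige
      · exact inv.crossSep i i' hilt hilt' hpos hneg (hreach_mono_tm hc)
      · have h2 : i = im := Fin.ext (by omega)
        rw [h2] at hc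
        exact inv.negSep i' hilt' hneg im.castSucc (by simp [himv]) (hreach_mono_tm hc)
    · -- the target is the new node
      have h2 : i' = im := Fin.ext (by omega)
      subst h2
      rcases hcase with ⟨hx, hml⟩ | ⟨hx, hml⟩
      · -- pushed from p_m: its inflow is nonnegative, contradiction
        exfalso
        have hglim := hml.2.2.2.1
        have h3 := hneg
        rw [hema] at h3
        have h4 : G.inflow g (p im.castSucc) = - G.inflow g (p im.succ) := by
          linarith
        rw [h4] at h3
        linarith
      · -- pushed towards p_m; the source is an old positive node
        have hilt : (i:ℕ) < m := by
          rcases Nat.lt_or_ge (i:ℕ) m with h | h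
          · exact h
          · exfalso
            have h2 : i = im := Fin.ext (by omega)
            rw [h2] at hpos
            have hglim := hml.2.2.2.1
            have h3 := hpos
            rw [hema] at h3
            linarith
        intro hreach
        have hc := hSpos i hilt hpos (p im.castSucc) hreach
        exact inv.posSep i hilt hpos im.castSucc (by simp [himv]) (hreach_mono_tm hc)

end Dgraph
/-- correctness of the abstract path-fixing algorithm: the final flow is a
pseudoflow, differs from `f0` by a flow conserved off the path, and leaves no residual
path from positive-inflow path nodes to negative-inflow path nodes. -/
theorem stmt14 {V D : Type} [Fintype D] [DecidableEq V] [DecidableEq D]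
    (G : Dgraph V D) (c0 : D → ℝ) (hc0 : ∀ d, 0 ≤ c0 d)
    (k : ℕ) (p : Fin (k+1) → V) (hp : Function.Injective p)
    (dP : Fin k → D)
    (hdt : ∀ i, G.tail (dP i) = p i.castSucc) (hdh : ∀ i, G.head (dP i) = p i.succ)
    (f0 : D → ℝ) (hf0 : G.Pseudoflow c0 f0)
    (M : ℝ) (hM : M = ∑ d : D, c0 d)
    (f : ℕ → D → ℝ) (hinit : f 0 = f0)
    (hstep : ∀ i : Fin k, G.FixStep c0 M p dP i (f (i : ℕ)) (f ((i : ℕ) + 1))) :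
    G.Pseudoflow c0 (f k) ∧
    (∀ v, (∀ j : Fin (k+1), p j ≠ v) → G.inflow (f k) v = G.inflow f0 v) ∧
    (∀ j j' : Fin (k+1), 0 < G.inflow (f k) (p j) → G.inflow (f k) (p j') < 0 →
      ¬ G.ResReach (fun d => c0 d - f k d) (p j) (p j')) := by
  have hinv : ∀ m : ℕ, m ≤ k → Dgraph.FixInv G c0 M k p dP f0 f m := by
    intro m
    induction m with
    | zero => exact fun _ => Dgraph.fixinv_zero hc0 hM hf0 hinit
    | succ n ih =>
        intro hn
        have hnk : n < k := by omega
        exact Dgraph.fixinv_step hc0 hM hp hdt hdh hf0 hnk (hstep ⟨n, hnk⟩) (ih (by omega))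
  have inv := hinv k le_rfl
  have hcapk : (fun d => G.fixCaps c0 M dP k d - f k d) = fun d => c0 d - f k d := by
    funext d
    rw [G.fixCaps_last]
  refine ⟨⟨inv.anti, fun d => ?_⟩, ?_, ?_⟩
  · have h1 := inv.le d
    rwa [G.fixCaps_last d] at h1
  · intro v hv
    exact inv.untouched v (fun l _ => hv l)
  · intro j j' hj hj'
    rw [← hcapk]
    by_cases hjk : (j:ℕ) < k
    · have hjc : (⟨(j:ℕ), hjk⟩ : Fin k).castSucc = j := Fin.ext rfl
      have hepos : 0 < G.inflow (f (((⟨(j:ℕ), hjk⟩ : Fin k) : ℕ)+1))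
          (p (⟨(j:ℕ), hjk⟩ : Fin k).castSucc) := by
        have h2 := inv.settled ⟨(j:ℕ), hjk⟩ hjk
        rw [hjc] at h2 ⊢
        rw [← h2]
        exact hj
      by_cases hj'k : (j':ℕ) < k
      · have hj'c : (⟨(j':ℕ), hj'k⟩ : Fin k).castSucc = j' := Fin.ext rfl
        have heneg : G.inflow (f (((⟨(j':ℕ), hj'k⟩ : Fin k) : ℕ)+1))
            (p (⟨(j':ℕ), hj'k⟩ : Fin k).castSucc) < 0 := by
          have h2 := inv.settled ⟨(j':ℕ), hj'k⟩ hj'k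
          rw [hj'c] at h2 ⊢
          rw [← h2]
          exact hj'
        have h3 := inv.crossSep ⟨(j:ℕ), hjk⟩ ⟨(j':ℕ), hj'k⟩ hjk hj'k hepos heneg
        rwa [hjc, hj'c] at h3
      · have hj'top : k ≤ (j':ℕ) := by omega
        have h3 := inv.posSep ⟨(j:ℕ), hjk⟩ hjk hepos j' hj'top
        rwa [hjc] at h3
    · have hjtop : k ≤ (j:ℕ) := by omega
      by_cases hj'k : (j':ℕ) < k
      · have hj'c : (⟨(j':ℕ), hj'k⟩ : Fin k).castSucc = j' := Fin.ext rfl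
        have heneg : G.inflow (f (((⟨(j':ℕ), hj'k⟩ : Fin k) : ℕ)+1))
            (p (⟨(j':ℕ), hj'k⟩ : Fin k).castSucc) < 0 := by
          have h2 := inv.settled ⟨(j':ℕ), hj'k⟩ hj'k
          rw [hj'c] at h2 ⊢
          rw [← h2]
          exact hj'
        have h3 := inv.negSep ⟨(j':ℕ), hj'k⟩ hj'k heneg j hjtop
        rwa [hj'c] at h3
      · exfalso
        have : j = j' := by
          apply Fin.ext
          have := j.isLt
          have := j'.isLt
          omega
        rw [this] at hj
        linarith
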